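/- For k ≥ 2, the complement graph of Δ^L_{k,1} contains no cycle of odd length; equivalently, the complement of Δ^L_{k,1} is bipartite. -/

import Mathlib

inductive V (k n : ℕ) where
  | c : V k n
  | a : Fin k → V k n
  | b : Fin (k + n) → V k n
deriving DecidableEq, Fintype

def adj (k n : ℕ) : V k n → V k n → Prop
  | .a i, .a j => i ≠ j
  | .b i, .b j => i ≠ j
  | .a i, .b j => (j : ℕ) = (i : ℕ) ∨ (j : ℕ) = k + i
  | .b j, .a i => (j : ℕ) = (i : ℕ) ∨ (j : ℕ) = k + i
  | .c, .a _ => True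
  | .a _, .c => True
  | _, _ => False

instance (k n : ℕ) : DecidableRel (adj k n) := fun x y => by
  cases x <;> cases y <;> simp only [adj] <;> infer_instance

def DeltaL (k n : ℕ) : SimpleGraph (V k n) where
  Adj := adj k n
  symm := by
    constructor
    intro x y h
    cases x <;> cases y <;> simp_all [adj] <;> tauto
  loopless := by
    constructor
    intro x h
    cases x <;> simp_all [adj]

def myColoring (k n : ℕ) : ((DeltaL k n)ᶜ).Coloring Bool :=
  SimpleGraph.Coloring.mk
    (fun v => match v with | .b _ => true | _ => false)
    (by
      intro u v h
      obtain ⟨hne, hnadj⟩ := h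
      cases u <;> cases v <;> simp_all [DeltaL, adj])

theorem stmt11 (k : ℕ) (hk : 2 ≤ k) :
    (DeltaL k 1)ᶜ.Colorable 2 ∧
    (∀ (v : V k 1) (p : (DeltaL k 1)ᶜ.Walk v v), p.IsCycle → Even p.length) := by
  constructor
  · simpa using (myColoring k 1).colorable
  · intro v p _
    rw [(myColoring k 1).even_length_iff_congr p]
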